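/- For any fixed policy π and two transition kernels P_{t1}, P_{t2} with max_{s,a}||P_{t2}(·|s,a)-P_{t1}(·|s,a)||_1 ≤ B_p, the discounted occupancy measures satisfy ∑_{(s,a)} |ρ^π_{t2}(s,a) - ρ^π_{t1}(s,a)| ≤ (∑_{h=0}^{H-1} γ^h h) B_p ≤ (γ/(1-γ)) ((1-γ^H)/(1-γ) - γ^{H-1} H) B_p. -/

import Mathlib

lemma stmt4_geom (γ : ℝ) (n : ℕ) :
    (∑ h ∈ Finset.range n, γ ^ h * h) * (1 - γ) ^ 2
      = γ * (1 - γ ^ n) - (1 - γ) * n * γ ^ n := by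
  induction n with
  | zero => simp
  | succ n ih =>
    rw [Finset.sum_range_succ, add_mul, ih]
    push_cast [pow_succ]
    ring

lemma stmt4_aux_sum {S A : Type*} [Fintype S] [Fintype A]
    (π : S → A → ℝ) (P : S → A → S → ℝ) (f : S → ℝ)
    (hπ1 : ∀ s, ∑ a, π s a = 1) (hPsum : ∀ s a, ∑ s', P s a s' = 1) :
    ∑ s, ∑ s', ∑ a, f s' * π s' a * P s' a s = ∑ s', f s' := by
  rw [Finset.sum_comm]
  refine Finset.sum_congr rfl fun s' _ => ?_
  rw [Finset.sum_comm]
  simp_rw [← Finset.mul_sum, hPsum, mul_one]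
  rw [← Finset.mul_sum, hπ1, mul_one]

/-- Difference between truncated discounted occupancy measures of two kernels
under the same policy. -/
theorem stmt4 {S A : Type*} [Fintype S] [DecidableEq S] [Fintype A]
    (γ : ℝ) (hγ0 : 0 < γ) (hγ1 : γ < 1) (H : ℕ)
    (π : S → A → ℝ) (P1 P2 : S → A → S → ℝ) (s0 : S) (Bp : ℝ)
    (hπ0 : ∀ s a, 0 ≤ π s a) (hπ1 : ∀ s, ∑ a, π s a = 1)
    (hP1nonneg : ∀ s a s', 0 ≤ P1 s a s')
    (hP2nonneg : ∀ s a s', 0 ≤ P2 s a s')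
    (hP1sum : ∀ s a, ∑ s', P1 s a s' = 1)
    (hP2sum : ∀ s a, ∑ s', P2 s a s' = 1)
    (hBp : ∀ s a, ∑ s', |P2 s a s' - P1 s a s'| ≤ Bp)
    (μ1 μ2 : ℕ → S → ℝ)
    (hμ10 : ∀ s, μ1 0 s = if s = s0 then 1 else 0)
    (hμ20 : ∀ s, μ2 0 s = if s = s0 then 1 else 0)
    (hμ1succ : ∀ h s, μ1 (h + 1) s = ∑ s', ∑ a, μ1 h s' * π s' a * P1 s' a s)
    (hμ2succ : ∀ h s, μ2 (h + 1) s = ∑ s', ∑ a, μ2 h s' * π s' a * P2 s' a s)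
    (ρ1 ρ2 : S → A → ℝ)
    (hρ1 : ∀ s a, ρ1 s a = ∑ h ∈ Finset.range H, γ ^ h * (μ1 h s * π s a))
    (hρ2 : ∀ s a, ρ2 s a = ∑ h ∈ Finset.range H, γ ^ h * (μ2 h s * π s a)) :
    (∑ s, ∑ a, |ρ2 s a - ρ1 s a| ≤ (∑ h ∈ Finset.range H, γ ^ h * h) * Bp) ∧
      (∑ h ∈ Finset.range H, γ ^ h * h) * Bp ≤
        γ / (1 - γ) * ((1 - γ ^ H) / (1 - γ) - γ ^ (H - 1) * H) * Bp := by
  have hne : (1 : ℝ) - γ ≠ 0 := by intro h; linarith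
  -- μ1 is nonnegative
  have hμ1nn : ∀ h s, 0 ≤ μ1 h s := by
    intro h
    induction h with
    | zero => intro s; rw [hμ10]; split <;> norm_num
    | succ n ih =>
      intro s
      rw [hμ1succ]
      refine Finset.sum_nonneg fun s' _ => Finset.sum_nonneg fun a _ => ?_
      exact mul_nonneg (mul_nonneg (ih s') (hπ0 s' a)) (hP1nonneg s' a s)
  -- μ1 sums to 1
  have hμ1sum : ∀ h, ∑ s, μ1 h s = 1 := by
    intro h
    induction h with
    | zero => simp [hμ10]
    | succ n ih =>
      simp_rw [hμ1succ]
      rw [stmt4_aux_sum π P1 (μ1 n) hπ1 hP1sum, ih]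
  -- main induction: total variation grows at most by Bp per step
  have hd : ∀ h, ∑ s, |μ2 h s - μ1 h s| ≤ h * Bp := by
    intro h
    induction h with
    | zero => simp [hμ10, hμ20]
    | succ n ih =>
      have key : ∀ s, μ2 (n + 1) s - μ1 (n + 1) s
          = (∑ s', ∑ a, (μ2 n s' - μ1 n s') * π s' a * P2 s' a s)
            + ∑ s', ∑ a, μ1 n s' * π s' a * (P2 s' a s - P1 s' a s) := by
        intro s
        rw [hμ1succ, hμ2succ, ← Finset.sum_add_distrib, ← Finset.sum_sub_distrib]
        refine Finset.sum_congr rfl fun s' _ => ?_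
        rw [← Finset.sum_add_distrib, ← Finset.sum_sub_distrib]
        exact Finset.sum_congr rfl fun a _ => by ring
      have step1 : ∑ s, |μ2 (n + 1) s - μ1 (n + 1) s|
          ≤ (∑ s, ∑ s', ∑ a, |μ2 n s' - μ1 n s'| * π s' a * P2 s' a s)
            + ∑ s, ∑ s', ∑ a, μ1 n s' * π s' a * |P2 s' a s - P1 s' a s| := by
        rw [← Finset.sum_add_distrib]
        refine Finset.sum_le_sum fun s _ => ?_
        rw [key s]
        refine (abs_add_le _ _).trans (add_le_add ?_ ?_)
        · refine (Finset.abs_sum_le_sum_abs _ _).trans (Finset.sum_le_sum fun s' _ => ?_)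
          refine (Finset.abs_sum_le_sum_abs _ _).trans (Finset.sum_le_sum fun a _ => ?_)
          rw [abs_mul, abs_mul, abs_of_nonneg (hπ0 s' a), abs_of_nonneg (hP2nonneg s' a s)]
        · refine (Finset.abs_sum_le_sum_abs _ _).trans (Finset.sum_le_sum fun s' _ => ?_)
          refine (Finset.abs_sum_le_sum_abs _ _).trans (Finset.sum_le_sum fun a _ => ?_)
          rw [abs_mul, abs_mul, abs_of_nonneg (hμ1nn n s'), abs_of_nonneg (hπ0 s' a)]
      have t1 : ∑ s, ∑ s', ∑ a, |μ2 n s' - μ1 n s'| * π s' a * P2 s' a s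
          = ∑ s', |μ2 n s' - μ1 n s'| :=
        stmt4_aux_sum π P2 _ hπ1 hP2sum
      have t2 : ∑ s, ∑ s', ∑ a, μ1 n s' * π s' a * |P2 s' a s - P1 s' a s| ≤ Bp := by
        rw [Finset.sum_comm]
        calc ∑ s', ∑ s, ∑ a, μ1 n s' * π s' a * |P2 s' a s - P1 s' a s|
            = ∑ s', ∑ a, μ1 n s' * π s' a * ∑ s, |P2 s' a s - P1 s' a s| := by
              refine Finset.sum_congr rfl fun s' _ => ?_
              rw [Finset.sum_comm]
              simp_rw [← Finset.mul_sum]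
          _ ≤ ∑ s', ∑ a, μ1 n s' * π s' a * Bp := by
              refine Finset.sum_le_sum fun s' _ => Finset.sum_le_sum fun a _ => ?_
              exact mul_le_mul_of_nonneg_left (hBp s' a)
                (mul_nonneg (hμ1nn n s') (hπ0 s' a))
          _ = ∑ s', μ1 n s' * Bp := by
              refine Finset.sum_congr rfl fun s' _ => ?_
              rw [← Finset.sum_mul, ← Finset.mul_sum, hπ1, mul_one]
          _ = (∑ s', μ1 n s') * Bp := (Finset.sum_mul _ _ _).symm
          _ = Bp := by rw [hμ1sum n, one_mul]
      calc ∑ s, |μ2 (n + 1) s - μ1 (n + 1) s|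
          ≤ (∑ s', |μ2 n s' - μ1 n s'|) + Bp := by
            refine step1.trans ?_
            rw [t1]
            exact add_le_add_right t2 _
        _ ≤ n * Bp + Bp := add_le_add_left ih _
        _ = (n + 1 : ℕ) * Bp := by push_cast; ring
  constructor
  · calc ∑ s, ∑ a, |ρ2 s a - ρ1 s a|
        = ∑ s, ∑ a, |∑ h ∈ Finset.range H, γ ^ h * ((μ2 h s - μ1 h s) * π s a)| := by
          refine Finset.sum_congr rfl fun s _ => Finset.sum_congr rfl fun a _ => ?_
          rw [hρ1, hρ2, ← Finset.sum_sub_distrib]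
          congr 1
          exact Finset.sum_congr rfl fun h _ => by ring
      _ ≤ ∑ s, ∑ a, ∑ h ∈ Finset.range H, γ ^ h * (|μ2 h s - μ1 h s| * π s a) := by
          refine Finset.sum_le_sum fun s _ => Finset.sum_le_sum fun a _ => ?_
          refine (Finset.abs_sum_le_sum_abs _ _).trans (Finset.sum_le_sum fun h _ => ?_)
          rw [abs_mul, abs_mul, abs_of_nonneg (pow_nonneg hγ0.le h),
            abs_of_nonneg (hπ0 s a)]
      _ = ∑ h ∈ Finset.range H, γ ^ h * ∑ s, |μ2 h s - μ1 h s| := by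
          have swap : ∀ s : S, ∑ a, ∑ h ∈ Finset.range H,
              γ ^ h * (|μ2 h s - μ1 h s| * π s a)
              = ∑ h ∈ Finset.range H, ∑ a, γ ^ h * (|μ2 h s - μ1 h s| * π s a) :=
            fun s => Finset.sum_comm
          simp_rw [swap]
          rw [Finset.sum_comm]
          refine Finset.sum_congr rfl fun h _ => ?_
          rw [Finset.mul_sum]
          refine Finset.sum_congr rfl fun s _ => ?_
          rw [← Finset.mul_sum, ← Finset.mul_sum, hπ1, mul_one]
      _ ≤ ∑ h ∈ Finset.range H, γ ^ h * (h * Bp) := by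
          refine Finset.sum_le_sum fun h _ => ?_
          exact mul_le_mul_of_nonneg_left (hd h) (pow_nonneg hγ0.le h)
      _ = (∑ h ∈ Finset.range H, γ ^ h * h) * Bp := by
          rw [Finset.sum_mul]
          exact Finset.sum_congr rfl fun h _ => by ring
  · refine le_of_eq ?_
    congr 1
    rcases Nat.eq_zero_or_pos H with h0 | hpos
    · subst h0; simp
    · have hsub : H - 1 + 1 = H := Nat.succ_pred_eq_of_pos hpos
      have hpow : γ * γ ^ (H - 1) = γ ^ H := by
        rw [← pow_succ', hsub]
      have := stmt4_geom γ H
      have h2 : (1 - γ) ^ 2 ≠ 0 := pow_ne_zero 2 hne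
      field_simp
      linear_combination this + (1 - γ) * (H:ℝ) * hpow
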